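/- The six quadratic forms C̄₁(x) = x₁² + x₂² + x₃², C̄₂(x) = x₁² + ρ²x₂² + ρx₃² (with ρ = e^{2πi/3}), and C̄₃,...,C̄₆ obtained from C̄₂ by applying powers of the Valentiner generator P, are linearly independent and hence span the six-dimensional space of ternary quadratic forms over ℂ. -/

import Mathlib

open MvPolynomial

noncomputable section

/-- `ρ = e^{2πi/3}`. -/
def ρ : ℂ := Complex.exp (2 * Real.pi * Complex.I / 3)

/-- `η = (3 + √15 i)/4`. -/
def η : ℂ := (3 + Real.sqrt 15 * Complex.I) / 4

/-- The six "barred" icosahedral conic forms of the Valentiner group, as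
quadratic forms (homogeneous ternary polynomials of degree 2) over `ℂ`. -/
def barConic : Fin 6 → MvPolynomial (Fin 3) ℂ :=
  ![X 0 ^ 2 + X 1 ^ 2 + X 2 ^ 2,
    X 0 ^ 2 + C (ρ ^ 2) * X 1 ^ 2 + C ρ * X 2 ^ 2,
    C η * (C (η / 3) * (X 0 ^ 2 + C ρ * X 1 ^ 2 + C (ρ ^ 2) * X 2 ^ 2) +
      (C (ρ ^ 2) * (X 0 * X 1) + C ρ * (X 0 * X 2) - X 1 * X 2)),
    C η * (C (η / 3) * (C ρ * X 0 ^ 2 + C (ρ ^ 2) * X 1 ^ 2 + X 2 ^ 2) +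
      (-(X 0 * X 1) + C (ρ ^ 2) * (X 0 * X 2) + C ρ * (X 1 * X 2))),
    C η * (C (η / 3) * (C ρ * X 0 ^ 2 + C (ρ ^ 2) * X 1 ^ 2 + X 2 ^ 2) -
      (X 0 * X 1 + C (ρ ^ 2) * (X 0 * X 2) + C ρ * (X 1 * X 2))),
    C η * (C (η / 3) * (X 0 ^ 2 + C ρ * X 1 ^ 2 + C (ρ ^ 2) * X 2 ^ 2) +
      (C (ρ ^ 2) * (X 0 * X 1) - C ρ * (X 0 * X 2) + X 1 * X 2))]

/-! ### Auxiliary material -/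

/-- If `s • p` is an explicit combination of six members of a submodule (with `s ≠ 0`),
then `p` belongs to the submodule. -/
private lemma mem6 (V : Submodule ℂ (MvPolynomial (Fin 3) ℂ))
    {g₀ g₁ g₂ g₃ g₄ g₅ p : MvPolynomial (Fin 3) ℂ}
    (h₀ : g₀ ∈ V) (h₁ : g₁ ∈ V) (h₂ : g₂ ∈ V) (h₃ : g₃ ∈ V) (h₄ : g₄ ∈ V) (h₅ : g₅ ∈ V)
    (c₀ c₁ c₂ c₃ c₄ c₅ : ℂ) {s : ℂ} (hs : s ≠ 0)
    (h : C s * p = C c₀ * g₀ + C c₁ * g₁ + C c₂ * g₂ + C c₃ * g₃ + C c₄ * g₄ + C c₅ * g₅) :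
    p ∈ V := by
  rw [← V.smul_mem_iff hs, smul_eq_C_mul, h]
  refine V.add_mem (V.add_mem (V.add_mem (V.add_mem (V.add_mem ?_ ?_) ?_) ?_) ?_) ?_ <;>
    rw [← smul_eq_C_mul]
  exacts [V.smul_mem _ h₀, V.smul_mem _ h₁, V.smul_mem _ h₂, V.smul_mem _ h₃,
    V.smul_mem _ h₄, V.smul_mem _ h₅]

private lemma monomial_triple (e f g : ℕ) (cc : ℂ) :
    monomial (Finsupp.single (0 : Fin 3) e + (Finsupp.single 1 f + Finsupp.single 2 g)) cc
      = C cc * (X 0 ^ e * (X 1 ^ f * X 2 ^ g)) := by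
  rw [monomial_single_add, monomial_single_add, ← C_mul_X_pow_eq_monomial]
  ring

/-- A submodule containing the six quadratic monomials contains all homogeneous
quadratic polynomials. -/
private lemma homog_le (V : Submodule ℂ (MvPolynomial (Fin 3) ℂ))
    (h0 : (X 0 ^ 2 : MvPolynomial (Fin 3) ℂ) ∈ V)
    (h1 : (X 1 ^ 2 : MvPolynomial (Fin 3) ℂ) ∈ V)
    (h2 : (X 2 ^ 2 : MvPolynomial (Fin 3) ℂ) ∈ V)
    (h3 : (X 0 * X 1 : MvPolynomial (Fin 3) ℂ) ∈ V)
    (h4 : (X 0 * X 2 : MvPolynomial (Fin 3) ℂ) ∈ V)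
    (h5 : (X 1 * X 2 : MvPolynomial (Fin 3) ℂ) ∈ V) :
    homogeneousSubmodule (Fin 3) ℂ 2 ≤ V := by
  intro p hp
  rw [homogeneousSubmodule_eq_finsupp_supported, AddMonoidAlgebra.mem_supported] at hp
  rw [← p.support_sum_monomial_coeff]
  refine Submodule.sum_mem _ fun v hv => ?_
  have hdeg : v.degree = 2 := hp hv
  have hsum : v 0 + v 1 + v 2 = 2 := by
    have h2' : ∑ i : Fin 3, v i = 2 := by
      rw [← hdeg, Finsupp.degree]
      exact (Finset.sum_subset (Finset.subset_univ _)
        (fun i _ hi => Finsupp.notMem_support_iff.mp hi)).symm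
    simpa [Fin.sum_univ_three] using h2'
  obtain ⟨cc, hcc⟩ : ∃ cc, coeff v p = cc := ⟨_, rfl⟩
  obtain ⟨a, ha⟩ : ∃ a, v 0 = a := ⟨_, rfl⟩
  obtain ⟨b, hb⟩ : ∃ b, v 1 = b := ⟨_, rfl⟩
  obtain ⟨c, hc⟩ : ∃ c, v 2 = c := ⟨_, rfl⟩
  have hveq : v = Finsupp.single 0 a + (Finsupp.single 1 b + Finsupp.single 2 c) := by
    ext i
    fin_cases i <;> simp [Finsupp.single_apply, ← ha, ← hb, ← hc]
  rw [ha, hb, hc] at hsum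
  rw [hcc, hveq, monomial_triple]
  have hA : a ≤ 2 := by omega
  have hB : b ≤ 2 := by omega
  have hC : c ≤ 2 := by omega
  interval_cases a <;> interval_cases b <;> interval_cases c <;>
    first
      | (exfalso; omega)
      | (simp only [pow_zero, pow_one, one_mul, mul_one, ← smul_eq_C_mul]
         first
           | exact V.smul_mem _ h0
           | exact V.smul_mem _ h1
           | exact V.smul_mem _ h2
           | exact V.smul_mem _ h3
           | exact V.smul_mem _ h4
           | exact V.smul_mem _ h5)

private lemma cons_val_five {α : Type*} (x : α) (u : Fin 5 → α) :
    Matrix.vecCons x u 5 = u 4 := rfl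

private def dq : Fin 6 → (Fin 3 →₀ ℕ) :=
  ![Finsupp.single 0 2, Finsupp.single 1 2, Finsupp.single 2 2,
    Finsupp.single 0 1 + Finsupp.single 1 1, Finsupp.single 0 1 + Finsupp.single 2 1,
    Finsupp.single 1 1 + Finsupp.single 2 1]

private lemma dq_apply : ∀ i : Fin 6, ∀ k : Fin 3, dq i k =
    (![![2,0,0], ![0,2,0], ![0,0,2], ![1,1,0], ![1,0,1], ![0,1,1]] : Fin 6 → Fin 3 → ℕ) i k := by
  intro i k
  fin_cases i <;> fin_cases k <;>
    simp [dq, cons_val_five, Finsupp.single_apply, Matrix.vecHead, Matrix.vecTail]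

private lemma dq_inj : Function.Injective dq := by
  intro i j h
  have h0 := DFunLike.congr_fun h 0
  have h1 := DFunLike.congr_fun h 1
  have h2 := DFunLike.congr_fun h 2
  rw [dq_apply i 0, dq_apply j 0] at h0
  rw [dq_apply i 1, dq_apply j 1] at h1
  rw [dq_apply i 2, dq_apply j 2] at h2
  fin_cases i <;> fin_cases j <;> simp_all [cons_val_five]

private def Mq : Fin 6 → MvPolynomial (Fin 3) ℂ :=
  ![X 0 ^ 2, X 1 ^ 2, X 2 ^ 2, X 0 * X 1, X 0 * X 2, X 1 * X 2]

private lemma mon_pair (i j : Fin 3) :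
    monomial (Finsupp.single i 1 + Finsupp.single j 1) (1 : ℂ) = X i * X j := by
  rw [monomial_single_add, ← X_pow_eq_monomial]
  ring

private lemma Mq_li : LinearIndependent ℂ Mq := by
  have h := (basisMonomials (Fin 3) ℂ).linearIndependent.comp dq dq_inj
  have hEq : Mq = (basisMonomials (Fin 3) ℂ) ∘ dq := by
    funext k
    show Mq k = basisMonomials (Fin 3) ℂ (dq k)
    rw [coe_basisMonomials]
    fin_cases k
    · exact X_pow_eq_monomial
    · exact X_pow_eq_monomial
    · exact X_pow_eq_monomial
    · exact (mon_pair 0 1).symm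
    · exact (mon_pair 0 2).symm
    · exact (mon_pair 1 2).symm
  rw [hEq]
  exact h

private lemma hx2 (i : Fin 3) : (X i ^ 2 : MvPolynomial (Fin 3) ℂ).IsHomogeneous 2 :=
  isHomogeneous_X_pow i 2

private lemma hxx (i j : Fin 3) : (X i * X j : MvPolynomial (Fin 3) ℂ).IsHomogeneous 2 :=
  (isHomogeneous_X ℂ i).mul (isHomogeneous_X ℂ j)

/-- The six icosahedral conic forms `C̄₁, …, C̄₆` are linearly independent over `ℂ`
and hence span the six-dimensional space of ternary quadratic forms. -/
theorem barConic_linearIndependent_and_spans :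
    LinearIndependent ℂ barConic ∧
    Submodule.span ℂ (Set.range barConic) =
      MvPolynomial.homogeneousSubmodule (Fin 3) ℂ 2 := by
  -- scalar identities
  have hprim : IsPrimitiveRoot ρ 3 := by
    simpa [ρ] using Complex.isPrimitiveRoot_exp 3 (by norm_num)
  have h3 : ρ ^ 3 = 1 := hprim.pow_eq_one
  have hρ1 : ρ ≠ 1 := hprim.ne_one (by norm_num)
  have hq : ρ ^ 2 + ρ + 1 = 0 := by
    rcases mul_eq_zero.mp (show (ρ - 1) * (ρ ^ 2 + ρ + 1) = 0 by linear_combination h3) with h | h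
    · exact absurd (by linear_combination h) hρ1
    · exact h
  have hρ0 : ρ ≠ 0 := by
    intro h; rw [h] at h3; norm_num at h3
  have hη0 : η ≠ 0 := by
    intro h; rw [η, div_eq_zero_iff] at h
    rcases h with h | h
    · have := congrArg Complex.re h; simp at this
    · norm_num at h
  have hqC : (C ρ : MvPolynomial (Fin 3) ℂ) ^ 2 + C ρ + 1 = 0 := by
    simpa using congrArg (C : ℂ → MvPolynomial (Fin 3) ℂ) hq
  have hbC : (C η : MvPolynomial (Fin 3) ℂ) = 3 * C (η / 3) := by
    rw [show ((3 : MvPolynomial (Fin 3) ℂ)) = C (3 : ℂ) from (map_ofNat C 3).symm, ← C_mul]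
    congr 1; ring
  -- unfolded entries
  have e0 : barConic 0 = X 0 ^ 2 + X 1 ^ 2 + X 2 ^ 2 := rfl
  have e1 : barConic 1 = X 0 ^ 2 + C (ρ ^ 2) * X 1 ^ 2 + C ρ * X 2 ^ 2 := rfl
  have e2 : barConic 2 = C η * (C (η / 3) * (X 0 ^ 2 + C ρ * X 1 ^ 2 + C (ρ ^ 2) * X 2 ^ 2) +
      (C (ρ ^ 2) * (X 0 * X 1) + C ρ * (X 0 * X 2) - X 1 * X 2)) := rfl
  have e3 : barConic 3 = C η * (C (η / 3) * (C ρ * X 0 ^ 2 + C (ρ ^ 2) * X 1 ^ 2 + X 2 ^ 2) +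
      (-(X 0 * X 1) + C (ρ ^ 2) * (X 0 * X 2) + C ρ * (X 1 * X 2))) := rfl
  have e4 : barConic 4 = C η * (C (η / 3) * (C ρ * X 0 ^ 2 + C (ρ ^ 2) * X 1 ^ 2 + X 2 ^ 2) -
      (X 0 * X 1 + C (ρ ^ 2) * (X 0 * X 2) + C ρ * (X 1 * X 2))) := rfl
  have e5 : barConic 5 = C η * (C (η / 3) * (X 0 ^ 2 + C ρ * X 1 ^ 2 + C (ρ ^ 2) * X 2 ^ 2) +
      (C (ρ ^ 2) * (X 0 * X 1) - C ρ * (X 0 * X 2) + X 1 * X 2)) := rfl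
  set V := Submodule.span ℂ (Set.range barConic) with hVdef
  have hP : ∀ k : Fin 6, barConic k ∈ V := fun k => Submodule.subset_span ⟨k, rfl⟩
  -- the auxiliary quadric S = x₀² + ρx₁² + ρ²x₂² lies in the span
  have hS : (X 0 ^ 2 + C ρ * X 1 ^ 2 + C (ρ ^ 2) * X 2 ^ 2 : MvPolynomial (Fin 3) ℂ) ∈ V := by
    refine mem6 V (hP 0) (hP 1) (hP 2) (hP 3) (hP 4) (hP 5) 0 0 (3 * ρ) 3 3 (3 * ρ)
      (mul_ne_zero (mul_ne_zero (by norm_num : (4 : ℂ) ≠ 0) (pow_ne_zero 2 hη0)) hρ0)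
      (s := 4 * η ^ 2 * ρ) ?_
    simp only [e0, e1, e2, e3, e4, e5, map_mul, map_pow, map_neg, map_one, map_zero,
      map_ofNat, hbC]
    linear_combination (18 * C (η/3) * (X 0 * X 1) - 18 * (C (η/3) : MvPolynomial (Fin 3) ℂ)^2 * X 2 ^ 2
      - 18 * C ρ * C (η/3) * (X 0 * X 1) + 18 * C ρ * (C (η/3))^2 * X 2 ^ 2) * hqC
  -- the six monomials lie in the span
  have hm3 : (X 0 * X 1 : MvPolynomial (Fin 3) ℂ) ∈ V := by
    refine mem6 V (hP 0) (hP 1) (hP 2) (hP 3) (hP 4) (hP 5) 0 0 ρ (-1) (-1) ρ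
      (mul_ne_zero (by norm_num : (4 : ℂ) ≠ 0) hη0) (s := 4 * η) ?_
    simp only [e0, e1, e2, e3, e4, e5, map_mul, map_pow, map_neg, map_one, map_zero,
      map_ofNat, hbC]
    linear_combination (6 * C (η/3) * (X 0 * X 1) + 6 * (C (η/3) : MvPolynomial (Fin 3) ℂ)^2 * X 2 ^ 2
      - 6 * C ρ * C (η/3) * (X 0 * X 1) - 6 * C ρ * (C (η/3))^2 * X 2 ^ 2) * hqC
  have hm4 : (X 0 * X 2 : MvPolynomial (Fin 3) ℂ) ∈ V := by
    refine mem6 V (hP 0) (hP 1) (hP 2) (hP 3) (hP 4) (hP 5) 0 0 (ρ ^ 2) ρ (-ρ) (-ρ ^ 2)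
      (mul_ne_zero (by norm_num : (4 : ℂ) ≠ 0) hη0) (s := 4 * η) ?_
    simp only [e0, e1, e2, e3, e4, e5, map_mul, map_pow, map_neg, map_one, map_zero,
      map_ofNat, hbC]
    linear_combination (12 * C (η/3) * (X 0 * X 2)
      - 12 * C ρ * (C (η/3) : MvPolynomial (Fin 3) ℂ) * (X 0 * X 2)) * hqC
  have hm5 : (X 1 * X 2 : MvPolynomial (Fin 3) ℂ) ∈ V := by
    refine mem6 V (hP 0) (hP 1) (hP 2) (hP 3) (hP 4) (hP 5) 0 0 (-ρ ^ 2) ρ (-ρ) (ρ ^ 2)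
      (mul_ne_zero (mul_ne_zero (by norm_num : (4 : ℂ) ≠ 0) hη0) (pow_ne_zero 2 hρ0))
      (s := 4 * η * ρ ^ 2) ?_
    simp only [e0, e1, e2, e3, e4, e5, map_mul, map_pow, map_neg, map_one, map_zero,
      map_ofNat, hbC]
    ring
  have hm0 : (X 0 ^ 2 : MvPolynomial (Fin 3) ℂ) ∈ V := by
    refine mem6 V (hP 0) (hP 1) hS (hP 0) (hP 0) (hP 0) 1 1 1 0 0 0
      (by norm_num : (3 : ℂ) ≠ 0) (s := 3) ?_
    simp only [e0, e1, map_mul, map_pow, map_neg, map_one, map_zero, map_ofNat]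
    linear_combination (-(X 2 ^ 2) - (X 1 ^ 2 : MvPolynomial (Fin 3) ℂ)) * hqC
  have hm1 : (X 1 ^ 2 : MvPolynomial (Fin 3) ℂ) ∈ V := by
    refine mem6 V (hP 0) (hP 1) hS (hP 0) (hP 0) (hP 0) 1 ρ (ρ ^ 2) 0 0 0
      (by norm_num : (3 : ℂ) ≠ 0) (s := 3) ?_
    simp only [e0, e1, map_mul, map_pow, map_neg, map_one, map_zero, map_ofNat]
    linear_combination (-(X 2 ^ 2) + 2 * X 1 ^ 2 - X 0 ^ 2 + C ρ * X 2 ^ 2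
      - 2 * C ρ * X 1 ^ 2 - (C ρ : MvPolynomial (Fin 3) ℂ)^2 * X 2 ^ 2) * hqC
  have hm2 : (X 2 ^ 2 : MvPolynomial (Fin 3) ℂ) ∈ V := by
    refine mem6 V (hP 0) (hP 1) hS (hP 0) (hP 0) (hP 0) 1 (ρ ^ 2) ρ 0 0 0
      (by norm_num : (3 : ℂ) ≠ 0) (s := 3) ?_
    simp only [e0, e1, map_mul, map_pow, map_neg, map_one, map_zero, map_ofNat]
    linear_combination (2 * X 2 ^ 2 - X 1 ^ 2 - X 0 ^ 2 - 2 * C ρ * X 2 ^ 2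
      + C ρ * X 1 ^ 2 - (C ρ : MvPolynomial (Fin 3) ℂ)^2 * X 1 ^ 2) * hqC
  -- each conic is homogeneous of degree 2
  have hhomog : ∀ k : Fin 6, barConic k ∈ homogeneousSubmodule (Fin 3) ℂ 2 := by
    intro k
    rw [mem_homogeneousSubmodule]
    fin_cases k
    · exact ((hx2 0).add (hx2 1)).add (hx2 2)
    · exact ((hx2 0).add ((hx2 1).C_mul _)).add ((hx2 2).C_mul _)
    · exact (((((hx2 0).add ((hx2 1).C_mul _)).add ((hx2 2).C_mul _)).C_mul _).add
        ((((hxx 0 1).C_mul _).add ((hxx 0 2).C_mul _)).sub (hxx 1 2))).C_mul _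
    · exact ((((((hx2 0).C_mul _).add ((hx2 1).C_mul _)).add (hx2 2)).C_mul _).add
        (((hxx 0 1).neg.add ((hxx 0 2).C_mul _)).add ((hxx 1 2).C_mul _))).C_mul _
    · exact ((((((hx2 0).C_mul _).add ((hx2 1).C_mul _)).add (hx2 2)).C_mul _).sub
        (((hxx 0 1).add ((hxx 0 2).C_mul _)).add ((hxx 1 2).C_mul _))).C_mul _
    · exact (((((hx2 0).add ((hx2 1).C_mul _)).add ((hx2 2).C_mul _)).C_mul _).add
        ((((hxx 0 1).C_mul _).sub ((hxx 0 2).C_mul _)).add (hxx 1 2))).C_mul _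
  have hVhom : V = homogeneousSubmodule (Fin 3) ℂ 2 :=
    le_antisymm (Submodule.span_le.mpr (by rintro x ⟨k, rfl⟩; exact hhomog k))
      (homog_le V hm0 hm1 hm2 hm3 hm4 hm5)
  refine ⟨?_, hVhom⟩
  -- linear independence via dimension count
  have hMq_mem : ∀ k : Fin 6, Mq k ∈ homogeneousSubmodule (Fin 3) ℂ 2 := by
    intro k
    rw [mem_homogeneousSubmodule]
    fin_cases k
    exacts [hx2 0, hx2 1, hx2 2, hxx 0 1, hxx 0 2, hxx 1 2]
  have hMspan : Submodule.span ℂ (Set.range Mq) = homogeneousSubmodule (Fin 3) ℂ 2 := by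
    refine le_antisymm (Submodule.span_le.mpr (by rintro x ⟨k, rfl⟩; exact hMq_mem k))
      (homog_le _ ?_ ?_ ?_ ?_ ?_ ?_)
    exacts [Submodule.subset_span ⟨0, rfl⟩, Submodule.subset_span ⟨1, rfl⟩,
      Submodule.subset_span ⟨2, rfl⟩, Submodule.subset_span ⟨3, rfl⟩,
      Submodule.subset_span ⟨4, rfl⟩, Submodule.subset_span ⟨5, rfl⟩]
  have hspan_eq : Submodule.span ℂ (Set.range barConic) = Submodule.span ℂ (Set.range Mq) :=
    (hVdef.symm.trans hVhom).trans hMspan.symm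
  rw [linearIndependent_iff_card_eq_finrank_span]
  show Fintype.card (Fin 6) = Module.finrank ℂ (Submodule.span ℂ (Set.range barConic))
  rw [hspan_eq, finrank_span_eq_card Mq_li]

end
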